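/- Let p be a prime, F an algebraically closed field of characteristic p, S a finite set, and π : S → S a bijection. Define the group endomorphism Φ of the abelian group of functions S → Fˣ (with pointwise multiplication) by Φ(f)(s) = f(π(s))^p, and let δ be the endomorphism f ↦ f·Φ(f)⁻¹. Then both the kernel and the cokernel of δ are torsion abelian groups; equivalently, δ becomes bijective after tensoring with ℚ. -/
import Mathlib


/-- For an algebraically closed field `F` of characteristic `p`, a finite set `S` with a
permutation `π`, and the twisted Frobenius endomorphism `Φ f = fun s => f (π s) ^ p` of the
group of functions `S → Fˣ`, the kernel and the cokernel of `δ : f ↦ f · (Φ f)⁻¹` are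
torsion abelian groups (equivalently, `δ` becomes bijective after tensoring with `ℚ`). -/
theorem stmt6 (p : ℕ) [Fact p.Prime] (F : Type) [Field F] [IsAlgClosed F] [CharP F p]
    (S : Type) [Fintype S] (π : Equiv.Perm S)
    (δ : (S → Fˣ) →* (S → Fˣ))
    (hδ : ∀ (f : S → Fˣ) (s : S), δ f s = f s * (f (π s) ^ p)⁻¹) :
    (∀ f ∈ δ.ker, ∃ n : ℕ, 0 < n ∧ f ^ n = 1) ∧
    (∀ g : S → Fˣ, ∃ n : ℕ, 0 < n ∧ g ^ n ∈ δ.range) := by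
  set m := orderOf π with hm
  have hm0 : 0 < m := orderOf_pos π
  have hπm : π ^ m = 1 := pow_orderOf_eq_one π
  have hp2 : 2 ≤ p := (Fact.out : p.Prime).two_le
  have hpm : 1 ≤ p ^ m := Nat.one_le_pow _ _ (by omega)
  have hn : 0 < p ^ m - 1 := by
    have : 2 ≤ p ^ m := le_trans hp2 (Nat.le_self_pow hm0.ne' p)
    omega
  have hsub : p ^ m - 1 + 1 = p ^ m := by omega
  constructor
  · intro f hf
    refine ⟨p ^ m - 1, hn, ?_⟩
    have hker : ∀ s, f s = f (π s) ^ p := by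
      intro s
      have h1 : f s * (f (π s) ^ p)⁻¹ = 1 := by
        rw [← hδ]
        exact congrFun (MonoidHom.mem_ker.mp hf) s
      exact mul_inv_eq_one.mp h1
    have hiter : ∀ k s, f s = f ((π ^ k) s) ^ p ^ k := by
      intro k
      induction k with
      | zero => intro s; simp
      | succ k ih =>
        intro s
        calc f s = f (π s) ^ p := hker s
        _ = (f ((π ^ k) (π s)) ^ p ^ k) ^ p := by rw [← ih (π s)]
        _ = f ((π ^ (k + 1)) s) ^ p ^ (k + 1) := by
            rw [← pow_mul, ← pow_succ, pow_succ π, Equiv.Perm.mul_apply]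
    funext s
    have h2 : f s = f s ^ p ^ m := by
      have := hiter m s
      rwa [hπm, Equiv.Perm.one_apply] at this
    have h3 : f s ^ (p ^ m - 1) * f s = 1 * f s := by
      rw [← pow_succ, hsub, ← h2, one_mul]
    have h4 := mul_right_cancel h3
    simpa using h4
  · intro g
    refine ⟨p ^ m - 1, hn, ?_⟩
    set h : S → Fˣ := fun s => ∏ i ∈ Finset.range m, g ((π ^ i) s) ^ p ^ i with hh
    have key : ∀ s, h (π s) ^ p * g s = h s * g s ^ p ^ m := by
      intro s
      have e1 : h (π s) ^ p = ∏ i ∈ Finset.range m, g ((π ^ (i + 1)) s) ^ p ^ (i + 1) := by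
        rw [hh]
        rw [← Finset.prod_pow]
        refine Finset.prod_congr rfl fun i _ => ?_
        rw [← pow_mul, ← pow_succ, pow_succ π, Equiv.Perm.mul_apply]
      rw [e1]
      have e2 : (∏ i ∈ Finset.range m, g ((π ^ (i + 1)) s) ^ p ^ (i + 1)) *
          (g ((π ^ 0) s) ^ p ^ 0) =
          ∏ i ∈ Finset.range (m + 1), g ((π ^ i) s) ^ p ^ i :=
        (Finset.prod_range_succ' (fun i => g ((π ^ i) s) ^ p ^ i) m).symm
      have e3 : ∏ i ∈ Finset.range (m + 1), g ((π ^ i) s) ^ p ^ i =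
          (∏ i ∈ Finset.range m, g ((π ^ i) s) ^ p ^ i) * g ((π ^ m) s) ^ p ^ m :=
        Finset.prod_range_succ _ m
      simp only [pow_zero, pow_one, Equiv.Perm.one_apply] at e2
      rw [e2, e3, hπm] at *
      simp [hh]
    refine ⟨fun s => (h s)⁻¹, ?_⟩
    funext s
    rw [hδ]
    have : h (π s) ^ p = h s * g s ^ (p ^ m - 1) := by
      have h3 : h (π s) ^ p * g s = (h s * g s ^ (p ^ m - 1)) * g s := by
        rw [key s, mul_assoc, ← pow_succ, hsub]
      exact mul_right_cancel h3
    simp only [Pi.pow_apply]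
    rw [inv_pow, inv_inv, this]
    group
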